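/- Let K[u,v] be graded by ℤ/cℤ with deg u = ā, deg v = b̄ (images of positive integers a, b with a > b). If φ̃ = (f̃, g̃) is a graded automorphism of K[u,v] such that f̃ contains no monomial v^q with bq < a and g̃ has zero constant term, then there exists a graded automorphism φ of K[x,y,z] (with deg x = a, deg y = b, deg z = -c) fixing z with α(φ) = φ̃. -/

import Mathlib

open MvPolynomial

variable {K : Type*}

/-- Homogeneity for the ℤ-grading of `K[x,y,z]` with `deg x = a, deg y = b, deg z = -c`. -/
def IsWtHom [CommRing K] (a b c : ℕ) (p : MvPolynomial (Fin 3) K) (d : ℤ) : Prop :=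
  ∀ m ∈ p.support, (a : ℤ) * (m 0 : ℤ) + (b : ℤ) * (m 1 : ℤ) - (c : ℤ) * (m 2 : ℤ) = d

/-- Graded automorphism of `K[x,y,z]` for this grading. -/
def IsGradedAut [CommRing K] (a b c : ℕ)
    (φ : MvPolynomial (Fin 3) K ≃ₐ[K] MvPolynomial (Fin 3) K) : Prop :=
  ∀ (d : ℤ) (p : MvPolynomial (Fin 3) K), IsWtHom a b c p d → IsWtHom a b c (φ p) d

/-- Homogeneity for the `ℤ/cℤ`-grading of `K[u,v]` with `deg u = ā, deg v = b̄`. -/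
def IsModHom [CommRing K] (a b c : ℕ) (p : MvPolynomial (Fin 2) K) (d : ZMod c) : Prop :=
  ∀ m ∈ p.support, (m 0 : ZMod c) * (a : ZMod c) + (m 1 : ZMod c) * (b : ZMod c) = d

/-- The substitution `z = 1`. -/
noncomputable def subZ [CommRing K] :
    MvPolynomial (Fin 3) K →ₐ[K] MvPolynomial (Fin 2) K :=
  aeval ![X 0, X 1, 1]

section Helpers
variable [CommRing K]

lemma fin2_ext (m : Fin 2 →₀ ℕ) : Finsupp.single 0 (m 0) + Finsupp.single 1 (m 1) = m := by
  ext i; fin_cases i <;> simp [Finsupp.single_apply]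

lemma fin3_eq (m n : Fin 3 →₀ ℕ) (h0 : m 0 = n 0) (h1 : m 1 = n 1) (h2 : m 2 = n 2) : m = n := by
  ext i; fin_cases i <;> assumption

noncomputable def res (n : Fin 3 →₀ ℕ) : Fin 2 →₀ ℕ :=
  Finsupp.single 0 (n 0) + Finsupp.single 1 (n 1)

@[simp] lemma res_apply0 (n : Fin 3 →₀ ℕ) : res n 0 = n 0 := by
  simp [res, Finsupp.single_apply]
@[simp] lemma res_apply1 (n : Fin 3 →₀ ℕ) : res n 1 = n 1 := by
  simp [res, Finsupp.single_apply]

lemma subZ_monomial (n : Fin 3 →₀ ℕ) (r : K) :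
    subZ (monomial n r) = monomial (res n) r := by
  rw [subZ, aeval_monomial, monomial_eq, Finsupp.prod_fintype _ _ (fun i => pow_zero _),
    Finsupp.prod_fintype _ _ (fun i => pow_zero _), Fin.prod_univ_three, Fin.prod_univ_two]
  simp [algebraMap_eq, res, Finsupp.single_apply]

/-- substitution z = 0 -/
noncomputable def subZ0 : MvPolynomial (Fin 3) K →ₐ[K] MvPolynomial (Fin 2) K :=
  aeval ![X 0, X 1, 0]

lemma subZ0_monomial (n : Fin 3 →₀ ℕ) (r : K) :
    subZ0 (monomial n r) = if n 2 = 0 then monomial (res n) r else 0 := by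
  rw [subZ0, aeval_monomial, monomial_eq, Finsupp.prod_fintype _ _ (fun i => pow_zero _),
    Finsupp.prod_fintype _ _ (fun i => pow_zero _), Fin.prod_univ_three, Fin.prod_univ_two]
  rcases Nat.eq_zero_or_pos (n 2) with h | h
  · simp [h, algebraMap_eq, res, Finsupp.single_apply]
  · simp [zero_pow h.ne', h.ne', algebraMap_eq, res, Finsupp.single_apply]

lemma CmulX {σ : Type*} (r : K) (i : σ) :
    (C r * X i : MvPolynomial σ K) = monomial (Finsupp.single i 1) r := by
  rw [← pow_one (X i : MvPolynomial σ K), X_pow_eq_monomial, C_mul_monomial, mul_one]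
end Helpers

section Slice
variable [CommRing K] {σ τ : Type*} [DecidableEq τ]

noncomputable def wslice (w : (σ →₀ ℕ) → τ) (p : MvPolynomial σ K) (t : τ) :
    MvPolynomial σ K :=
  ∑ m ∈ p.support.filter (fun m => w m = t), monomial m (coeff m p)

lemma coeff_slice (w : (σ →₀ ℕ) → τ) (p : MvPolynomial σ K) (t : τ) (n : σ →₀ ℕ) :
    coeff n (wslice w p t) = if w n = t then coeff n p else 0 := by
  classical
  rw [wslice, coeff_sum]
  simp only [coeff_monomial]
  rw [Finset.sum_ite_eq' (p.support.filter (fun m => w m = t)) n (fun m => coeff m p)]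
  by_cases h1 : w n = t <;> by_cases h2 : n ∈ p.support <;>
    simp_all [Finset.mem_filter, mem_support_iff]

lemma wslice_support {w : (σ →₀ ℕ) → τ} {p : MvPolynomial σ K} {t : τ} :
    ∀ m ∈ (wslice w p t).support, w m = t ∧ m ∈ p.support := by
  intro m hm
  rw [mem_support_iff, coeff_slice] at hm
  split_ifs at hm with h
  · exact ⟨h, mem_support_iff.mpr hm⟩
  · exact absurd rfl hm

lemma sum_slice (w : (σ →₀ ℕ) → τ) (p : MvPolynomial σ K) [DecidableEq (σ →₀ ℕ)] :
    ∑ t ∈ p.support.image w, wslice w p t = p := by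
  ext n
  rw [coeff_sum]
  simp only [coeff_slice]
  rw [Finset.sum_ite_eq (p.support.image w) (w n) (fun _ => coeff n p)]
  by_cases h : n ∈ p.support
  · simp [Finset.mem_image.mpr ⟨n, h, rfl⟩]
  · simp only [mem_support_iff, not_not] at h
    simp [h]

lemma slices_indep {w : (σ →₀ ℕ) → τ} {s : Finset τ} {Q : τ → MvPolynomial σ K}
    (hQ : ∀ t ∈ s, ∀ m ∈ (Q t).support, w m = t) {S : MvPolynomial σ K} {d : τ}
    (hS : ∀ m ∈ S.support, w m = d) (hsum : ∑ t ∈ s, Q t = S) :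
    ∀ t ∈ s, t ≠ d → Q t = 0 := by
  intro t ht htd
  ext m
  rw [coeff_zero]
  by_contra hm
  have hwm : w m = t := hQ t ht m (mem_support_iff.mpr hm)
  have hmS : coeff m S = 0 := by
    by_contra hmS
    exact htd (hwm ▸ hS m (mem_support_iff.mpr hmS))
  have hz : ∑ t' ∈ s, coeff m (Q t') = 0 := by rw [← coeff_sum, hsum, hmS]
  rw [Finset.sum_eq_single t (fun t' ht' htt' => by
    by_contra h
    exact htt' ((hQ t' ht' m (mem_support_iff.mpr h)).symm.trans hwm))
    (fun h => absurd ht h)] at hz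
  exact hm hz
end Slice

section Lift
variable [CommRing K] (a b c : ℕ) (d : ℤ)

noncomputable def ext3 (m : Fin 2 →₀ ℕ) (k : ℕ) : Fin 3 →₀ ℕ :=
  Finsupp.single 0 (m 0) + Finsupp.single 1 (m 1) + Finsupp.single 2 k

@[simp] lemma ext3_apply0 (m : Fin 2 →₀ ℕ) (k : ℕ) : ext3 m k 0 = m 0 := by
  simp [ext3, Finsupp.single_apply]
@[simp] lemma ext3_apply1 (m : Fin 2 →₀ ℕ) (k : ℕ) : ext3 m k 1 = m 1 := by
  simp [ext3, Finsupp.single_apply]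
@[simp] lemma ext3_apply2 (m : Fin 2 →₀ ℕ) (k : ℕ) : ext3 m k 2 = k := by
  simp [ext3, Finsupp.single_apply]
@[simp] lemma res_ext3 (m : Fin 2 →₀ ℕ) (k : ℕ) : res (ext3 m k) = m := by
  rw [res, ext3_apply0, ext3_apply1, fin2_ext]

noncomputable def kexp (m : Fin 2 →₀ ℕ) : ℕ := (((a:ℤ) * m 0 + b * m 1 - d).toNat) / c

lemma kexp_spec (hc : 0 < c) (m : Fin 2 →₀ ℕ)
    (h : ∃ k : ℕ, (a:ℤ) * m 0 + b * m 1 - c * k = d) :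
    (a:ℤ) * m 0 + b * m 1 - c * (kexp a b c d m) = d := by
  obtain ⟨k, hk⟩ := h
  have h1 : ((a:ℤ) * m 0 + b * m 1 - d) = (c : ℤ) * k := by linarith
  rw [kexp, h1, show ((c:ℤ) * k) = ((c * k : ℕ) : ℤ) by push_cast; ring,
    Int.toNat_natCast, Nat.mul_div_cancel_left k hc]
  linarith

noncomputable def hlift (p : MvPolynomial (Fin 2) K) : MvPolynomial (Fin 3) K :=
  ∑ m ∈ p.support, monomial (ext3 m (kexp a b c d m)) (coeff m p)

variable {a b c d} {p : MvPolynomial (Fin 2) K} (hc : 0 < c)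
  (H : ∀ m ∈ p.support, ∃ k : ℕ, (a:ℤ) * m 0 + b * m 1 - c * k = d)

lemma subZ_hlift : subZ (hlift a b c d p) = p := by
  rw [hlift, map_sum]
  simp only [subZ_monomial, res_ext3]
  exact support_sum_monomial_coeff p

include hc H in
lemma hlift_isWtHom : IsWtHom a b c (hlift a b c d p) d := by
  intro n hn
  rw [mem_support_iff, hlift, coeff_sum] at hn
  obtain ⟨m, hm, hne⟩ := Finset.exists_ne_zero_of_sum_ne_zero hn
  rw [coeff_monomial] at hne
  have he : ext3 m (kexp a b c d m) = n := by by_contra h; simp [h] at hne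
  have hsp := kexp_spec a b c d hc m (H m hm)
  rw [← he, ext3_apply0, ext3_apply1, ext3_apply2]
  exact hsp

include hc H in
lemma subZ0_hlift_supp :
    ∀ n ∈ (subZ0 (hlift a b c d p)).support, n ∈ p.support ∧ (a:ℤ) * n 0 + b * n 1 = d := by
  intro n hn
  rw [mem_support_iff, hlift, map_sum] at hn
  simp only [subZ0_monomial, ext3_apply2, res_ext3] at hn
  rw [coeff_sum] at hn
  obtain ⟨m, hm, hne⟩ := Finset.exists_ne_zero_of_sum_ne_zero hn
  by_cases hk : kexp a b c d m = 0
  · simp only [hk, if_pos rfl, coeff_monomial] at hne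
    have he : m = n := by by_contra h; simp [h] at hne
    subst he
    have hsp := kexp_spec a b c d hc m (H m hm)
    rw [hk] at hsp
    exact ⟨hm, by push_cast at hsp ⊢; linarith⟩
  · simp [hk] at hne

include hc H in
lemma coeff_subZ0_hlift (n : Fin 2 →₀ ℕ) (hn : (a:ℤ) * n 0 + b * n 1 = d) :
    coeff n (subZ0 (hlift a b c d p)) = coeff n p := by
  rw [hlift, map_sum]
  simp only [subZ0_monomial, ext3_apply2, res_ext3]
  rw [coeff_sum]
  by_cases hmem : n ∈ p.support
  · rw [Finset.sum_eq_single n]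
    · have hspec := kexp_spec a b c d hc n (H n hmem)
      have hk : kexp a b c d n = 0 := by
        have h2 : (c:ℤ) * (kexp a b c d n) = 0 := by linarith
        have hcz : (c:ℤ) ≠ 0 := by exact_mod_cast hc.ne'
        have := mul_eq_zero.mp h2
        omega
      rw [hk, if_pos rfl, coeff_monomial, if_pos rfl]
    · intro m hm hmn
      split_ifs with h
      · rw [coeff_monomial, if_neg hmn]
      · exact coeff_zero n
    · intro h; exact absurd hmem h
  · rw [Finset.sum_eq_zero, (mem_support_iff.not_left.mp hmem)]
    intro m hm
    split_ifs with h
    · rw [coeff_monomial, if_neg (fun he => hmem (by rw [← he]; exact hm))]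
    · exact coeff_zero n
end Lift

section Wt
variable [CommRing K] {a b c : ℕ}

lemma wt_congr {p : MvPolynomial (Fin 3) K} {d d' : ℤ} (h : IsWtHom a b c p d) (e : d = d') :
    IsWtHom a b c p d' := e ▸ h

lemma wt_sum {ι : Type*} {s : Finset ι} {Q : ι → MvPolynomial (Fin 3) K} {d : ℤ}
    (h : ∀ i ∈ s, IsWtHom a b c (Q i) d) : IsWtHom a b c (∑ i ∈ s, Q i) d := by
  intro m hm
  rw [mem_support_iff, coeff_sum] at hm
  obtain ⟨i, hi, hne⟩ := Finset.exists_ne_zero_of_sum_ne_zero hm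
  exact h i hi m (mem_support_iff.mpr hne)

lemma wt_monomial (n : Fin 3 →₀ ℕ) (r : K) :
    IsWtHom a b c (monomial n r) ((a:ℤ) * n 0 + b * n 1 - c * n 2) := by
  intro m hm
  have := support_monomial_subset hm
  rw [Finset.mem_singleton] at this
  subst this; rfl

lemma wt_C (r : K) : IsWtHom a b c (C r) 0 := by
  have := wt_monomial (a := a) (b := b) (c := c) (0 : Fin 3 →₀ ℕ) r
  rw [monomial_zero'] at this
  exact wt_congr this (by simp)

lemma wt_one : IsWtHom a b c (1 : MvPolynomial (Fin 3) K) 0 := by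
  have := wt_C (a := a) (b := b) (c := c) (1 : K); rwa [map_one] at this

lemma wt_mul {p q : MvPolynomial (Fin 3) K} {d e : ℤ}
    (hp : IsWtHom a b c p d) (hq : IsWtHom a b c q e) : IsWtHom a b c (p * q) (d + e) := by
  intro m hm
  have hmm := support_mul p q hm
  rw [Finset.mem_add] at hmm
  obtain ⟨m1, h1, m2, h2, rfl⟩ := hmm
  have e1 := hp m1 h1
  have e2 := hq m2 h2
  simp only [Finsupp.add_apply]
  push_cast
  linarith

lemma wt_pow {p : MvPolynomial (Fin 3) K} {d : ℤ} (hp : IsWtHom a b c p d) (n : ℕ) :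
    IsWtHom a b c (p ^ n) ((n : ℤ) * d) := by
  induction n with
  | zero => exact wt_congr wt_one (by simp)
  | succ n ih =>
    rw [pow_succ]
    exact wt_congr (wt_mul ih hp) (by push_cast; ring)

lemma wt_neg {p : MvPolynomial (Fin 3) K} {d : ℤ} (hp : IsWtHom a b c p d) :
    IsWtHom a b c (-p) d := by
  intro m hm; rw [support_neg] at hm; exact hp m hm

lemma wt_add {p q : MvPolynomial (Fin 3) K} {d : ℤ}
    (hp : IsWtHom a b c p d) (hq : IsWtHom a b c q d) : IsWtHom a b c (p + q) d := by
  intro m hm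
  rcases Finset.mem_union.mp (support_add hm) with h | h
  · exact hp m h
  · exact hq m h

lemma wt_sub {p q : MvPolynomial (Fin 3) K} {d : ℤ}
    (hp : IsWtHom a b c p d) (hq : IsWtHom a b c q d) : IsWtHom a b c (p - q) d := by
  rw [sub_eq_add_neg]; exact wt_add hp (wt_neg hq)

lemma wt_X0 : IsWtHom a b c (X 0 : MvPolynomial (Fin 3) K) (a : ℤ) := by
  have := wt_monomial (a := a) (b := b) (c := c) (Finsupp.single 0 1) (1 : K)
  rw [← X_pow_eq_monomial, pow_one] at this
  exact wt_congr this (by simp [Finsupp.single_apply])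

lemma wt_X1 : IsWtHom a b c (X 1 : MvPolynomial (Fin 3) K) (b : ℤ) := by
  have := wt_monomial (a := a) (b := b) (c := c) (Finsupp.single 1 1) (1 : K)
  rw [← X_pow_eq_monomial, pow_one] at this
  exact wt_congr this (by simp [Finsupp.single_apply])

lemma wt_X2 : IsWtHom a b c (X 2 : MvPolynomial (Fin 3) K) (-(c : ℤ)) := by
  have := wt_monomial (a := a) (b := b) (c := c) (Finsupp.single 2 1) (1 : K)
  rw [← X_pow_eq_monomial, pow_one] at this
  exact wt_congr this (by simp [Finsupp.single_apply])

lemma aeval_isWtHom {F G : MvPolynomial (Fin 3) K} (hF : IsWtHom a b c F a)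
    (hG : IsWtHom a b c G b) {p : MvPolynomial (Fin 3) K} {d : ℤ} (hp : IsWtHom a b c p d) :
    IsWtHom a b c (aeval ![F, G, X 2] p) d := by
  have hrw : aeval ![F, G, X 2] p
      = ∑ m ∈ p.support, C (coeff m p) * (F ^ m 0 * G ^ m 1 * X 2 ^ m 2) := by
    conv_lhs => rw [p.as_sum]
    rw [map_sum]
    refine Finset.sum_congr rfl fun m _ => ?_
    rw [aeval_monomial, Finsupp.prod_fintype _ _ (fun i => pow_zero _), Fin.prod_univ_three]
    simp [algebraMap_eq]
  rw [hrw]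
  apply wt_sum
  intro m hm
  have hd := hp m hm
  have hh : IsWtHom a b c (C (coeff m p) * (F ^ m 0 * G ^ m 1 * X 2 ^ m 2))
      (0 + ((m 0 : ℤ) * a + ((m 1 : ℤ) * b + (m 2 : ℤ) * (-(c:ℤ))))) :=
    wt_mul (wt_C _) (by
      rw [mul_assoc]
      exact wt_mul (wt_pow hF _) (wt_mul (wt_pow hG _) (wt_pow wt_X2 _)))
  exact wt_congr hh (by linarith)

lemma subZ_inj_wt (hc : 0 < c) {P : MvPolynomial (Fin 3) K} {d : ℤ}
    (hP : IsWtHom a b c P d) (h0 : subZ P = 0) : P = 0 := by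
  ext m
  rw [coeff_zero]
  by_contra hm
  have hms : m ∈ P.support := mem_support_iff.mpr hm
  have hrw : subZ P = ∑ m' ∈ P.support, monomial (res m') (coeff m' P) := by
    conv_lhs => rw [P.as_sum]
    rw [map_sum]
    exact Finset.sum_congr rfl fun m' _ => subZ_monomial m' _
  have hco : coeff (res m) (subZ P) = coeff m P := by
    rw [hrw, coeff_sum, Finset.sum_eq_single m]
    · rw [coeff_monomial, if_pos rfl]
    · intro m' hm' hne
      rw [coeff_monomial, if_neg]
      intro hres
      apply hne
      have h0' : m' 0 = m 0 := by rw [← res_apply0 m', ← res_apply0 m, hres]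
      have h1' : m' 1 = m 1 := by rw [← res_apply1 m', ← res_apply1 m, hres]
      have e1 := hP m' hm'
      have e2 := hP m hms
      refine fin3_eq m' m h0' h1' ?_
      rw [h0', h1'] at e1
      have hcc : (c:ℤ) * m' 2 = (c:ℤ) * m 2 := by linarith
      have hcz : (c:ℤ) ≠ 0 := by exact_mod_cast hc.ne'
      exact_mod_cast mul_left_cancel₀ hcz hcc
    · intro h; exact absurd hms h
  rw [h0, coeff_zero] at hco
  exact hm hco.symm
end Wt

section Div
variable [CommRing K]

lemma subZ0_eq_zero_coeff {s : MvPolynomial (Fin 3) K} (h : subZ0 s = 0) :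
    ∀ n, n 2 = 0 → coeff n s = 0 := by
  intro n hn2
  by_contra hcn
  have hns : n ∈ s.support := mem_support_iff.mpr hcn
  have hrw : subZ0 s = ∑ m ∈ s.support, if m 2 = 0 then monomial (res m) (coeff m s) else 0 := by
    conv_lhs => rw [s.as_sum]
    rw [map_sum]
    exact Finset.sum_congr rfl fun m _ => subZ0_monomial m _
  have hco : coeff (res n) (subZ0 s) = coeff n s := by
    rw [hrw, coeff_sum, Finset.sum_eq_single n]
    · rw [if_pos hn2, coeff_monomial, if_pos rfl]
    · intro m hm hne
      split_ifs with h2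
      · rw [coeff_monomial, if_neg]
        intro hres
        exact hne (fin3_eq m n (by rw [← res_apply0 m, ← res_apply0 n, hres])
          (by rw [← res_apply1 m, ← res_apply1 n, hres]) (by rw [h2, hn2]))
      · exact coeff_zero _
    · intro hns'; exact absurd hns hns'
  rw [h, coeff_zero] at hco
  exact hcn hco.symm

lemma X2_dvd {s : MvPolynomial (Fin 3) K} (h : ∀ n, n 2 = 0 → coeff n s = 0) :
    ∃ s₀, s = X 2 * s₀ := by
  classical
  refine ⟨∑ m ∈ s.support, monomial (m - Finsupp.single 2 1) (coeff m s), ?_⟩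
  rw [Finset.mul_sum]
  conv_lhs => rw [s.as_sum]
  refine Finset.sum_congr rfl fun m hm => ?_
  have hm2 : 1 ≤ m 2 := by
    by_contra h2
    exact mem_support_iff.mp hm (h m (by omega))
  have hmeq : Finsupp.single 2 1 + (m - Finsupp.single 2 1) = m := by
    ext i
    rw [Finsupp.add_apply, Finsupp.tsub_apply, Finsupp.single_apply]
    by_cases hi : (2 : Fin 3) = i
    · subst hi; rw [if_pos rfl]; omega
    · rw [if_neg hi]; omega
  rw [← pow_one (X 2 : MvPolynomial (Fin 3) K), X_pow_eq_monomial, monomial_mul, one_mul, hmeq]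
end Div

section LinCoeff
variable [CommRing K]

lemma coeff_single_mul_zero {r s : MvPolynomial (Fin 2) K} (i : Fin 2)
    (hr : constantCoeff r = 0) (hs : constantCoeff s = 0) :
    coeff (Finsupp.single i 1) (r * s) = 0 := by
  rw [coeff_mul]
  apply Finset.sum_eq_zero
  rintro ⟨u, v⟩ huv
  rw [Finset.HasAntidiagonal.mem_antidiagonal] at huv
  have huv' : ∀ j, u j + v j = (Finsupp.single i 1) j := fun j => by
    rw [← Finsupp.add_apply, huv]
  have hcases : u = 0 ∨ v = 0 := by
    rcases Nat.eq_zero_or_pos (u i) with hui | hui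
    · left; ext j
      have hj' := huv' j
      rw [Finsupp.single_apply] at hj'
      have : u j = 0 := by
        by_cases hj : i = j
        · subst hj; omega
        · rw [if_neg hj] at hj'; omega
      simpa using this
    · right; ext j
      have hj' := huv' j
      rw [Finsupp.single_apply] at hj'
      have : v j = 0 := by
        by_cases hj : i = j
        · subst hj; rw [if_pos rfl] at hj'; omega
        · rw [if_neg hj] at hj'; omega
      simpa using this
  have hr' : coeff 0 r = 0 := hr
  have hs' : coeff 0 s = 0 := hs
  rcases hcases with h0 | h0 <;> rw [h0] <;> simp [hr', hs']

lemma constCoeff_pow_mul {f g : MvPolynomial (Fin 2) K}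
    (hf0 : constantCoeff f = 0) (hg0 : constantCoeff g = 0) {p q : ℕ} (hpq : 1 ≤ p + q) :
    constantCoeff (f ^ p * g ^ q) = 0 := by
  rw [map_mul, map_pow, map_pow, hf0, hg0]
  rcases Nat.eq_zero_or_pos p with hp | hp
  · subst hp
    rw [zero_pow (show q ≠ 0 by omega)]
    ring
  · rw [zero_pow (show p ≠ 0 from hp.ne')]
    ring

lemma coeff_single_pow {f g : MvPolynomial (Fin 2) K}
    (hf0 : constantCoeff f = 0) (hg0 : constantCoeff g = 0) (i : Fin 2) (p q : ℕ) :
    coeff (Finsupp.single i 1) (f ^ p * g ^ q) =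
      if p = 1 ∧ q = 0 then coeff (Finsupp.single i 1) f
      else if p = 0 ∧ q = 1 then coeff (Finsupp.single i 1) g else 0 := by
  rcases Nat.lt_or_ge (p + q) 2 with hlt | hge
  · rcases (by omega : (p = 0 ∧ q = 0) ∨ (p = 1 ∧ q = 0) ∨ (p = 0 ∧ q = 1)) with
      ⟨rfl, rfl⟩ | ⟨rfl, rfl⟩ | ⟨rfl, rfl⟩
    · simp only [pow_zero, one_mul, coeff_one]
      rw [if_neg (show ¬(0 : Fin 2 →₀ ℕ) = Finsupp.single i 1 by
        simp [eq_comm, Finsupp.single_eq_zero]),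
        ]
      simp
    · simp
    · simp
  · rw [if_neg (by omega), if_neg (by omega)]
    rcases Nat.eq_zero_or_pos p with hp | hp
    · subst hp
      obtain ⟨q', rfl⟩ : ∃ q', q = q' + 1 := ⟨q - 1, by omega⟩
      rw [pow_succ, pow_zero, one_mul]
      exact coeff_single_mul_zero i
        (by simpa using constCoeff_pow_mul hf0 hg0 (p := 0) (q := q') (show 1 ≤ 0 + q' by omega)) hg0
    · obtain ⟨p', rfl⟩ : ∃ p', p = p' + 1 := ⟨p - 1, by omega⟩
      rw [pow_succ, mul_comm (f ^ p') f, mul_assoc]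
      exact coeff_single_mul_zero i hf0
        (constCoeff_pow_mul hf0 hg0 (show 1 ≤ p' + q by omega))

lemma aeval_two_as_sum (f g : MvPolynomial (Fin 2) K) (P : MvPolynomial (Fin 2) K) :
    aeval ![f, g] P = ∑ m ∈ P.support, C (coeff m P) * (f ^ m 0 * g ^ m 1) := by
  conv_lhs => rw [P.as_sum]
  rw [map_sum]
  refine Finset.sum_congr rfl fun m _ => ?_
  rw [aeval_monomial, Finsupp.prod_fintype _ _ (fun i => pow_zero _), Fin.prod_univ_two]
  simp [algebraMap_eq, mul_assoc]

lemma e0_ne_e1 : (Finsupp.single 0 1 : Fin 2 →₀ ℕ) ≠ Finsupp.single 1 1 := by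
  intro h
  have := DFunLike.congr_fun h 0
  simp [Finsupp.single_apply] at this

lemma sum_support_pair (t : (Fin 2 →₀ ℕ) → K) (P : MvPolynomial (Fin 2) K)
    (h0 : ∀ m, coeff m P = 0 → t m = 0)
    (h1 : ∀ m, m ≠ Finsupp.single 0 1 → m ≠ Finsupp.single 1 1 → t m = 0) :
    ∑ m ∈ P.support, t m = t (Finsupp.single 0 1) + t (Finsupp.single 1 1) := by
  classical
  have step1 : ∑ m ∈ P.support, t m
      = ∑ m ∈ P.support ∪ {Finsupp.single 0 1, Finsupp.single 1 1}, t m :=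
    Finset.sum_subset Finset.subset_union_left fun m _ hm =>
      h0 m (by simpa [mem_support_iff, not_not] using hm)
  have step2 : ∑ m ∈ ({Finsupp.single 0 1, Finsupp.single 1 1} : Finset (Fin 2 →₀ ℕ)), t m
      = ∑ m ∈ P.support ∪ {Finsupp.single 0 1, Finsupp.single 1 1}, t m :=
    Finset.sum_subset Finset.subset_union_right fun m _ hm => by
      simp only [Finset.mem_insert, Finset.mem_singleton, not_or] at hm
      exact h1 m hm.1 hm.2
  rw [step1, ← step2, Finset.sum_pair e0_ne_e1]

lemma coeff_single_aeval {f g : MvPolynomial (Fin 2) K}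
    (hf0 : constantCoeff f = 0) (hg0 : constantCoeff g = 0)
    (P : MvPolynomial (Fin 2) K) (i : Fin 2) :
    coeff (Finsupp.single i 1) (aeval ![f, g] P) =
      coeff (Finsupp.single 0 1) P * coeff (Finsupp.single i 1) f +
      coeff (Finsupp.single 1 1) P * coeff (Finsupp.single i 1) g := by
  classical
  rw [aeval_two_as_sum, coeff_sum]
  simp only [coeff_C_mul, coeff_single_pow hf0 hg0 i]
  rw [sum_support_pair (fun m => coeff m P *
      (if m 0 = 1 ∧ m 1 = 0 then coeff (Finsupp.single i 1) f
        else if m 0 = 0 ∧ m 1 = 1 then coeff (Finsupp.single i 1) g else 0)) P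
    (fun m hm => by beta_reduce; rw [hm, zero_mul])
    (fun m hm0 hm1 => by
      beta_reduce
      have h1 : ¬(m 0 = 1 ∧ m 1 = 0) := by
        rintro ⟨ha', hb'⟩
        apply hm0
        rw [← fin2_ext m, ha', hb']
        simp
      have h2 : ¬(m 0 = 0 ∧ m 1 = 1) := by
        rintro ⟨ha', hb'⟩
        apply hm1
        rw [← fin2_ext m, ha', hb']
        simp
      simp [h1, h2])]
  have v00 : (Finsupp.single 0 1 : Fin 2 →₀ ℕ) 0 = 1 := by simp
  have v01 : (Finsupp.single 0 1 : Fin 2 →₀ ℕ) 1 = 0 := by simp [Finsupp.single_apply]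
  have v10 : (Finsupp.single 1 1 : Fin 2 →₀ ℕ) 0 = 0 := by simp [Finsupp.single_apply]
  have v11 : (Finsupp.single 1 1 : Fin 2 →₀ ℕ) 1 = 1 := by simp
  simp [v00, v01, v10, v11]
end LinCoeff

section Shape
variable [Field K]

lemma shape_injective {α δ : K} (hα : α ≠ 0) (hδ : δ ≠ 0) (w : Polynomial K) :
    Function.Injective (aeval ![C α * X 0 + Polynomial.aeval (X 1) w, C δ * X 1] :
      MvPolynomial (Fin 2) K →ₐ[K] MvPolynomial (Fin 2) K) := by
  set Φ : MvPolynomial (Fin 2) K →ₐ[K] MvPolynomial (Fin 2) K :=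
    aeval ![C α * X 0 + Polynomial.aeval (X 1) w, C δ * X 1] with hΦ
  set Ψ : MvPolynomial (Fin 2) K →ₐ[K] MvPolynomial (Fin 2) K :=
    aeval ![C α⁻¹ * (X 0 - Polynomial.aeval (X 1)
      (w.comp (Polynomial.C δ⁻¹ * Polynomial.X))), C δ⁻¹ * X 1] with hΨ
  have key : Ψ.comp Φ = AlgHom.id K _ := by
    apply MvPolynomial.algHom_ext
    intro i
    fin_cases i
    · show Ψ (Φ (X 0)) = X 0
      have h1 : Φ (X 0) = C α * X 0 + Polynomial.aeval (X 1) w := by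
        rw [hΦ, aeval_X, Matrix.cons_val_zero]
      have h2 : Ψ (X 0) = C α⁻¹ * (X 0 - Polynomial.aeval (X 1)
          (w.comp (Polynomial.C δ⁻¹ * Polynomial.X))) := by
        rw [hΨ, aeval_X, Matrix.cons_val_zero]
      have h3 : Ψ (X 1) = C δ⁻¹ * X 1 := by
        rw [hΨ, aeval_X, Matrix.cons_val_one, Matrix.cons_val_zero]
      rw [h1, map_add, map_mul, h2, ← Polynomial.aeval_algHom_apply, h3]
      have h4 : Ψ (C α) = C α := by rw [← algebraMap_eq]; exact Ψ.commutes α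
      rw [h4, Polynomial.aeval_comp, map_mul, Polynomial.aeval_C, Polynomial.aeval_X,
        ← algebraMap_eq]
      rw [← mul_assoc, ← map_mul, mul_inv_cancel₀ hα, map_one, one_mul]
      ring
    · show Ψ (Φ (X 1)) = X 1
      have h1 : Φ (X 1) = C δ * X 1 := by
        rw [hΦ, aeval_X, Matrix.cons_val_one, Matrix.cons_val_zero]
      have h3 : Ψ (X 1) = C δ⁻¹ * X 1 := by
        rw [hΨ, aeval_X, Matrix.cons_val_one, Matrix.cons_val_zero]
      rw [h1, map_mul, h3]
      have h4 : Ψ (C δ) = C δ := by rw [← algebraMap_eq]; exact Ψ.commutes δ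
      rw [h4, ← mul_assoc, ← map_mul, mul_inv_cancel₀ hδ, map_one, one_mul]
  intro x y hxy
  have hx := AlgHom.congr_fun key x
  have hy := AlgHom.congr_fun key y
  rw [AlgHom.comp_apply, AlgHom.id_apply] at hx hy
  rw [← hx, ← hy, hxy]

lemma poly_of_supp0 {p : MvPolynomial (Fin 2) K} (h : ∀ m ∈ p.support, m 0 = 0) :
    ∃ w : Polynomial K, p = Polynomial.aeval (X 1) w := by
  classical
  refine ⟨∑ m ∈ p.support, Polynomial.monomial (m 1) (coeff m p), ?_⟩
  rw [map_sum]
  conv_lhs => rw [p.as_sum]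
  refine Finset.sum_congr rfl fun m hm => ?_
  rw [Polynomial.aeval_monomial, algebraMap_eq, X_pow_eq_monomial, C_mul_monomial, mul_one]
  congr 1
  have h2 : Finsupp.single 0 (m 0) + Finsupp.single 1 (m 1) = m := by
    ext i; fin_cases i <;> simp [Finsupp.single_apply]
  rw [← h2, h m hm]
  simp
end Shape

section Mod
variable [Field K]

lemma key_arith {c : ℕ} (hc : 0 < c) (S D : ℕ) (hge : D ≤ S)
    (hmod : (S : ZMod c) = (D : ZMod c)) : ∃ k : ℕ, (S : ℤ) - c * k = (D : ℤ) := by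
  have hmodeq : S ≡ D [MOD c] := (ZMod.natCast_eq_natCast_iff _ _ _).mp hmod
  have hdvd : c ∣ S - D := (Nat.modEq_iff_dvd' hge).mp hmodeq.symm
  refine ⟨(S - D) / c, ?_⟩
  have h2 : c * ((S - D) / c) = S - D := Nat.mul_div_cancel' hdvd
  have h3 : (c : ℤ) * (((S - D) / c : ℕ) : ℤ) = (S : ℤ) - (D : ℤ) := by
    rw [← Nat.cast_mul, h2, Nat.cast_sub hge]
  linarith

lemma inv_modHom {a b c : ℕ} {f g : MvPolynomial (Fin 2) K}
    (hinj : Function.Injective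
      (aeval ![f, g] : MvPolynomial (Fin 2) K →ₐ[K] MvPolynomial (Fin 2) K))
    (hgr : ∀ (d : ZMod c) (p : MvPolynomial (Fin 2) K),
      IsModHom a b c p d → IsModHom a b c ((aeval ![f, g]) p) d)
    {q : MvPolynomial (Fin 2) K} {d : ZMod c}
    (hQ : IsModHom a b c (aeval ![f, g] q) d) : IsModHom a b c q d := by
  classical
  set w : (Fin 2 →₀ ℕ) → ZMod c :=
    fun m => (m 0 : ZMod c) * (a : ZMod c) + (m 1 : ZMod c) * (b : ZMod c) with hw
  have hsplit : ∑ t ∈ q.support.image w, wslice w q t = q := sum_slice w q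
  have hker : ∀ t ∈ q.support.image w, t ≠ d → wslice w q t = 0 := by
    have hsum : ∑ t ∈ q.support.image w, (aeval ![f, g]) (wslice w q t) = aeval ![f, g] q := by
      rw [← map_sum, hsplit]
    have hind := slices_indep (w := w) (Q := fun t => aeval ![f, g] (wslice w q t))
      (S := aeval ![f, g] q) (d := d)
      (fun t ht m hm =>
        hgr t (wslice w q t) (fun m' hm' => (wslice_support m' hm').1) m hm) hQ hsum
    intro t ht htd
    apply hinj
    rw [map_zero]
    exact hind t ht htd
  intro m hm
  by_contra hne
  have hz : wslice w q (w m) = 0 := hker (w m) (Finset.mem_image_of_mem w hm) hne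
  have hcm : coeff m (wslice w q (w m)) = coeff m q := by rw [coeff_slice, if_pos rfl]
  rw [hz, coeff_zero] at hcm
  exact mem_support_iff.mp hm hcm.symm
end Mod

/-- if the graded automorphism `φ̃ = (f̃, g̃)` of `K[u,v]` is such that
`f̃` contains no monomial `v^q` with `bq < a` and `g̃` has zero constant term, then
it lifts: there is a graded automorphism `φ` of `K[x,y,z]` fixing `z` with `α(φ) = φ̃`. -/
theorem lift_criterion [Field K] [IsAlgClosed K] [CharZero K]
    (a b c : ℕ) (ha : 0 < a) (hb : 0 < b) (hc : 0 < c) (hab : b < a)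
    (hcop : Nat.gcd (Nat.gcd a b) c = 1)
    (f g : MvPolynomial (Fin 2) K)
    (hbij : Function.Bijective (aeval ![f, g] : MvPolynomial (Fin 2) K →ₐ[K] MvPolynomial (Fin 2) K))
    (hgr : ∀ (d : ZMod c) (p : MvPolynomial (Fin 2) K),
      IsModHom a b c p d → IsModHom a b c ((aeval ![f, g]) p) d)
    (hf : ∀ q : ℕ, b * q < a → coeff (Finsupp.single 1 q) f = 0)
    (hg : coeff 0 g = 0) :
    ∃ φ : MvPolynomial (Fin 3) K ≃ₐ[K] MvPolynomial (Fin 3) K,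
      IsGradedAut a b c φ ∧ φ (X 2) = X 2 ∧ subZ (φ (X 0)) = f ∧ subZ (φ (X 1)) = g := by
  classical
  -- mod-degrees of the generators
  have hXu : IsModHom a b c (X 0 : MvPolynomial (Fin 2) K) (a : ZMod c) := by
    intro m hm
    rw [support_X, Finset.mem_singleton] at hm
    subst hm
    simp [Finsupp.single_apply]
  have hXv : IsModHom a b c (X 1 : MvPolynomial (Fin 2) K) (b : ZMod c) := by
    intro m hm
    rw [support_X, Finset.mem_singleton] at hm
    subst hm
    simp [Finsupp.single_apply]
  have hfmod : IsModHom a b c f (a : ZMod c) := by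
    have h := hgr (a : ZMod c) (X 0) hXu
    rwa [aeval_X, Matrix.cons_val_zero] at h
  have hgmod : IsModHom a b c g (b : ZMod c) := by
    have h := hgr (b : ZMod c) (X 1) hXv
    rwa [aeval_X, Matrix.cons_val_one, Matrix.cons_val_zero] at h
  have hf0 : constantCoeff f = 0 := by
    have h := hf 0 (by simpa using ha)
    rwa [Finsupp.single_zero] at h
  have hg0 : constantCoeff g = 0 := hg
  have hfv : coeff (Finsupp.single 1 1) f = 0 := hf 1 (by simpa using hab)
  -- the inverse automorphism's components
  set e : MvPolynomial (Fin 2) K ≃ₐ[K] MvPolynomial (Fin 2) K :=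
    AlgEquiv.ofBijective (aeval ![f, g]) hbij with hedef
  have hcoe : ∀ x, e x = aeval ![f, g] x := fun x => rfl
  set f' : MvPolynomial (Fin 2) K := e.symm (X 0) with hf'def
  set g' : MvPolynomial (Fin 2) K := e.symm (X 1) with hg'def
  have hef' : aeval ![f, g] f' = X 0 := by rw [← hcoe]; exact e.apply_symm_apply _
  have heg' : aeval ![f, g] g' = X 1 := by rw [← hcoe]; exact e.apply_symm_apply _
  -- the linear coefficients
  have eq1 := coeff_single_aeval hf0 hg0 g' 1
  rw [heg', coeff_X, hfv, mul_zero, zero_add] at eq1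
  have hδ : coeff (Finsupp.single 1 1) g ≠ 0 := fun h => by
    rw [h, mul_zero, if_pos rfl] at eq1; exact one_ne_zero eq1
  have eq2 := coeff_single_aeval hf0 hg0 f' 1
  rw [hef', coeff_X' 0 (Finsupp.single 1 1), if_neg e0_ne_e1, hfv, mul_zero, zero_add] at eq2
  have hβ' : coeff (Finsupp.single 1 1) f' = 0 := by
    rcases mul_eq_zero.mp eq2.symm with h | h
    · exact h
    · exact absurd h hδ
  have eq3 := coeff_single_aeval hf0 hg0 f' 0
  rw [hef', coeff_X, hβ', zero_mul, add_zero] at eq3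
  have hα : coeff (Finsupp.single 0 1) f ≠ 0 := fun h => by
    rw [h, mul_zero, if_pos rfl] at eq3; exact one_ne_zero eq3
  -- arithmetic hypotheses for the lifts
  have Hf : ∀ m ∈ f.support, ∃ k : ℕ, (a:ℤ) * m 0 + b * m 1 - c * k = (a:ℤ) := by
    intro m hm
    have hmod := hfmod m hm
    have hcast : ((a * m 0 + b * m 1 : ℕ) : ZMod c) = ((a : ℕ) : ZMod c) := by
      push_cast
      linear_combination hmod
    have hge : a ≤ a * m 0 + b * m 1 := by
      rcases Nat.eq_zero_or_pos (m 0) with h0 | h0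
      · have hm1 : m = Finsupp.single 1 (m 1) := by
          rw [← fin2_ext m, h0]
          simp
        by_contra hlt
        push_neg at hlt
        rw [h0, Nat.mul_zero, Nat.zero_add] at hlt
        exact mem_support_iff.mp hm (by rw [hm1]; exact hf (m 1) hlt)
      · have h1 : a * 1 ≤ a * m 0 := Nat.mul_le_mul le_rfl h0
        omega
    obtain ⟨k, hk⟩ := key_arith hc _ a hge hcast
    refine ⟨k, ?_⟩
    push_cast at hk
    linarith
  have Hg : ∀ m ∈ g.support, ∃ k : ℕ, (a:ℤ) * m 0 + b * m 1 - c * k = (b:ℤ) := by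
    intro m hm
    have hmod := hgmod m hm
    have hcast : ((a * m 0 + b * m 1 : ℕ) : ZMod c) = ((b : ℕ) : ZMod c) := by
      push_cast
      linear_combination hmod
    have hmne : m ≠ 0 := fun h => mem_support_iff.mp hm (by rw [h]; exact hg)
    have hge : b ≤ a * m 0 + b * m 1 := by
      rcases Nat.eq_zero_or_pos (m 0) with h0 | h0
      · rcases Nat.eq_zero_or_pos (m 1) with h1 | h1
        · exact absurd (by rw [← fin2_ext m, h0, h1]; simp : m = 0) hmne
        · have h2 : b * 1 ≤ b * m 1 := Nat.mul_le_mul le_rfl h1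
          omega
      · have h2 : a * 1 ≤ a * m 0 := Nat.mul_le_mul le_rfl h0
        omega
    obtain ⟨k, hk⟩ := key_arith hc _ b hge hcast
    refine ⟨k, ?_⟩
    push_cast at hk
    linarith
  -- mod-degrees of the inverse components
  have hf'mod : IsModHom a b c f' (a : ZMod c) :=
    inv_modHom hbij.1 hgr (by rw [hef']; exact hXu)
  have hg'mod : IsModHom a b c g' (b : ZMod c) :=
    inv_modHom hbij.1 hgr (by rw [heg']; exact hXv)
  have Hf' : ∀ m ∈ f'.support, ∃ k : ℕ, (a:ℤ) * m 0 + b * m 1 - c * k = (a:ℤ) - c * a := by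
    intro m hm
    have hmod := hf'mod m hm
    have hcast : ((a * m 0 + b * m 1 + c * a : ℕ) : ZMod c) = ((a : ℕ) : ZMod c) := by
      push_cast
      rw [ZMod.natCast_self]
      linear_combination hmod
    have hge : a ≤ a * m 0 + b * m 1 + c * a := by
      have h1 : 1 * a ≤ c * a := Nat.mul_le_mul hc le_rfl
      omega
    obtain ⟨k, hk⟩ := key_arith hc _ a hge hcast
    refine ⟨k, ?_⟩
    push_cast at hk
    linarith
  have Hg' : ∀ m ∈ g'.support, ∃ k : ℕ, (a:ℤ) * m 0 + b * m 1 - c * k = (b:ℤ) - c * b := by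
    intro m hm
    have hmod := hg'mod m hm
    have hcast : ((a * m 0 + b * m 1 + c * b : ℕ) : ZMod c) = ((b : ℕ) : ZMod c) := by
      push_cast
      rw [ZMod.natCast_self]
      linear_combination hmod
    have hge : b ≤ a * m 0 + b * m 1 + c * b := by
      have h1 : 1 * b ≤ c * b := Nat.mul_le_mul hc le_rfl
      omega
    obtain ⟨k, hk⟩ := key_arith hc _ b hge hcast
    refine ⟨k, ?_⟩
    push_cast at hk
    linarith
  -- the lifted endomorphism Φ
  set F : MvPolynomial (Fin 3) K := hlift a b c (a:ℤ) f with hFdef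
  set G : MvPolynomial (Fin 3) K := hlift a b c (b:ℤ) g with hGdef
  have hFwt : IsWtHom a b c F (a:ℤ) := hlift_isWtHom hc Hf
  have hGwt : IsWtHom a b c G (b:ℤ) := hlift_isWtHom hc Hg
  have hsubF : subZ F = f := subZ_hlift
  have hsubG : subZ G = g := subZ_hlift
  set Φ : MvPolynomial (Fin 3) K →ₐ[K] MvPolynomial (Fin 3) K := aeval ![F, G, X 2] with hΦdef
  have hΦX0 : Φ (X 0) = F := by rw [hΦdef, aeval_X, Matrix.cons_val_zero]
  have hΦX1 : Φ (X 1) = G := by rw [hΦdef, aeval_X, Matrix.cons_val_one, Matrix.cons_val_zero]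
  have hΦX2 : Φ (X 2) = X 2 := by rw [hΦdef, aeval_X]; rfl
  have hpres : ∀ (d : ℤ) (p : MvPolynomial (Fin 3) K),
      IsWtHom a b c p d → IsWtHom a b c (Φ p) d := by
    intro d p hp
    rw [hΦdef]
    exact aeval_isWtHom hFwt hGwt hp
  have hsubZX0' : subZ (X 0 : MvPolynomial (Fin 3) K) = X 0 := by
    rw [subZ, aeval_X, Matrix.cons_val_zero]
  have hsubZX1' : subZ (X 1 : MvPolynomial (Fin 3) K) = X 1 := by
    rw [subZ, aeval_X, Matrix.cons_val_one, Matrix.cons_val_zero]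
  have hsubZX2' : subZ (X 2 : MvPolynomial (Fin 3) K) = 1 := by
    rw [subZ, aeval_X]; rfl
  have hsubZX : ∀ p, subZ (Φ p) = aeval ![f, g] (subZ p) := by
    have hcm : subZ.comp Φ = (aeval ![f, g]).comp subZ := by
      apply MvPolynomial.algHom_ext
      intro i
      fin_cases i
      · show subZ (Φ (X 0)) = aeval ![f, g] (subZ (X 0))
        rw [hΦX0, hsubF, hsubZX0', aeval_X, Matrix.cons_val_zero]
      · show subZ (Φ (X 1)) = aeval ![f, g] (subZ (X 1))
        rw [hΦX1, hsubG, hsubZX1', aeval_X, Matrix.cons_val_one, Matrix.cons_val_zero]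
      · show subZ (Φ (X 2)) = aeval ![f, g] (subZ (X 2))
        rw [hΦX2, hsubZX2', map_one]
    intro p
    have h := AlgHom.congr_fun hcm p
    simpa [AlgHom.comp_apply] using h
  -- injectivity of Φ
  have hinjΦ : Function.Injective Φ := by
    have hker : ∀ p, Φ p = 0 → p = 0 := by
      intro p hp0
      set w : (Fin 3 →₀ ℕ) → ℤ :=
        fun m => (a:ℤ) * m 0 + (b:ℤ) * m 1 - (c:ℤ) * m 2 with hw
      have hsplit := sum_slice w p
      have hsz : ∀ t ∈ p.support.image w, wslice w p t = 0 := by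
        intro t ht
        have hsum : ∑ t' ∈ p.support.image w, Φ (wslice w p t') = 0 := by
          rw [← map_sum, hsplit, hp0]
        have hz : Φ (wslice w p t) = 0 := by
          refine slices_indep (w := w) (Q := fun t' => Φ (wslice w p t'))
            (S := (0 : MvPolynomial (Fin 3) K)) (d := t + 1)
            (fun t' ht' m hm =>
              hpres t' (wslice w p t') (fun m' hm' => (wslice_support m' hm').1) m hm)
            (by simp) hsum t ht (by omega)
        have h1 : aeval ![f, g] (subZ (wslice w p t)) = 0 := by
          rw [← hsubZX, hz, map_zero]
        have h2 : subZ (wslice w p t) = 0 := by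
          apply hbij.1
          rw [map_zero]
          exact h1
        exact subZ_inj_wt hc (fun m' hm' => (wslice_support m' hm').1) h2
      rw [← hsplit]
      exact Finset.sum_eq_zero hsz
    intro x y hxy
    have h := hker (x - y) (by rw [map_sub, hxy, sub_self])
    exact sub_eq_zero.mp h
  -- the reduction mod z and its injectivity
  set φ0 : MvPolynomial (Fin 2) K →ₐ[K] MvPolynomial (Fin 2) K :=
    aeval ![subZ0 F, subZ0 G] with hφ0def
  have hsubZ0X0' : subZ0 (X 0 : MvPolynomial (Fin 3) K) = X 0 := by
    rw [subZ0, aeval_X, Matrix.cons_val_zero]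
  have hsubZ0X1' : subZ0 (X 1 : MvPolynomial (Fin 3) K) = X 1 := by
    rw [subZ0, aeval_X, Matrix.cons_val_one, Matrix.cons_val_zero]
  have hsubZ0X2' : subZ0 (X 2 : MvPolynomial (Fin 3) K) = 0 := by
    rw [subZ0, aeval_X]; rfl
  have hsubZ0X : ∀ p, subZ0 (Φ p) = φ0 (subZ0 p) := by
    have hcm : subZ0.comp Φ = φ0.comp subZ0 := by
      apply MvPolynomial.algHom_ext
      intro i
      fin_cases i
      · show subZ0 (Φ (X 0)) = φ0 (subZ0 (X 0))
        rw [hΦX0, hsubZ0X0', hφ0def, aeval_X, Matrix.cons_val_zero]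
      · show subZ0 (Φ (X 1)) = φ0 (subZ0 (X 1))
        rw [hΦX1, hsubZ0X1', hφ0def, aeval_X, Matrix.cons_val_one, Matrix.cons_val_zero]
      · show subZ0 (Φ (X 2)) = φ0 (subZ0 (X 2))
        rw [hΦX2, hsubZ0X2', map_zero]
    intro p
    have h := AlgHom.congr_fun hcm p
    simpa [AlgHom.comp_apply] using h
  -- shape of subZ0 F and subZ0 G
  have hF0supp : ∀ n ∈ (subZ0 F).support, n = Finsupp.single 0 1 ∨ n 0 = 0 := by
    intro n hn
    obtain ⟨hnf, hwt⟩ := subZ0_hlift_supp hc Hf n hn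
    rcases Nat.eq_zero_or_pos (n 0) with h0 | h0
    · right; exact h0
    · left
      have hwtn : a * n 0 + b * n 1 = a := by exact_mod_cast hwt
      have h5 : a * 1 ≤ a * n 0 := Nat.mul_le_mul le_rfl h0
      have h6 : b * n 1 = 0 := by omega
      have h7 : a * n 0 = a * 1 := by omega
      have hn1 : n 1 = 0 := by
        rcases Nat.mul_eq_zero.mp h6 with h | h
        · omega
        · exact h
      have hn0 : n 0 = 1 := Nat.eq_of_mul_eq_mul_left ha h7
      rw [← fin2_ext n, hn0, hn1]
      simp
  have hcoeffF0 : coeff (Finsupp.single 0 1) (subZ0 F) = coeff (Finsupp.single 0 1) f := by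
    refine coeff_subZ0_hlift hc Hf _ ?_
    simp [Finsupp.single_apply]
  have hG0eq : subZ0 G = C (coeff (Finsupp.single 1 1) g) * X 1 := by
    have hsupp : ∀ n ∈ (subZ0 G).support, n = Finsupp.single 1 1 := by
      intro n hn
      obtain ⟨hng, hwt⟩ := subZ0_hlift_supp hc Hg n hn
      have hwtn : a * n 0 + b * n 1 = b := by exact_mod_cast hwt
      have hn0 : n 0 = 0 := by
        by_contra h0
        have h5 : a * 1 ≤ a * n 0 := Nat.mul_le_mul le_rfl (show 1 ≤ n 0 by omega)
        omega
      rw [hn0, Nat.mul_zero, Nat.zero_add] at hwtn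
      have hn1 : n 1 = 1 := Nat.eq_of_mul_eq_mul_left hb (by omega : b * n 1 = b * 1)
      rw [← fin2_ext n, hn0, hn1]
      simp
    have hc1 : coeff (Finsupp.single 1 1) (subZ0 G) = coeff (Finsupp.single 1 1) g := by
      refine coeff_subZ0_hlift hc Hg _ ?_
      simp [Finsupp.single_apply]
    rw [CmulX]
    ext n
    by_cases hne1 : n = Finsupp.single 1 1
    · subst hne1
      rw [hc1, coeff_monomial, if_pos rfl]
    · rw [coeff_monomial, if_neg (fun h => hne1 h.symm)]
      by_contra hcn
      exact hne1 (hsupp n (mem_support_iff.mpr hcn))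
  have hsupp2 : ∀ m ∈ (subZ0 F - C (coeff (Finsupp.single 0 1) f) * X 0).support, m 0 = 0 := by
    intro m hm
    have hne : coeff m (subZ0 F) ≠ coeff m (C (coeff (Finsupp.single 0 1) f) * X 0) := by
      intro h
      exact mem_support_iff.mp hm (by rw [coeff_sub, h, sub_self])
    by_cases hme0 : m = Finsupp.single 0 1
    · exfalso
      apply hne
      subst hme0
      rw [hcoeffF0, CmulX, coeff_monomial, if_pos rfl]
    · have hmF : m ∈ (subZ0 F).support := by
        rw [mem_support_iff]
        intro h
        apply hne
        rw [h, CmulX, coeff_monomial, if_neg (fun hh => hme0 hh.symm)]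
      rcases hF0supp m hmF with h | h
      · exact absurd h hme0
      · exact h
  obtain ⟨wp, hwp⟩ := poly_of_supp0 hsupp2
  have hF0eq : subZ0 F = C (coeff (Finsupp.single 0 1) f) * X 0 + Polynomial.aeval (X 1) wp := by
    rw [← hwp]; ring
  have hφ0inj : Function.Injective φ0 := by
    rw [hφ0def, hF0eq, hG0eq]
    exact shape_injective hα hδ wp
  -- descent along powers of z
  have hdesc : ∀ t, X 2 * t ∈ Φ.range → t ∈ Φ.range := by
    rintro t ⟨s, hs⟩
    have hs' : Φ s = X 2 * t := hs
    have h0 : subZ0 (Φ s) = 0 := by rw [hs', map_mul, hsubZ0X2', zero_mul]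
    rw [hsubZ0X s] at h0
    have h1 : subZ0 s = 0 := by
      apply hφ0inj
      rw [map_zero]
      exact h0
    obtain ⟨s0, hs0⟩ := X2_dvd (subZ0_eq_zero_coeff h1)
    refine ⟨s0, ?_⟩
    have h2 : X 2 * Φ s0 = X 2 * t := by
      conv_lhs => rw [← hΦX2, ← map_mul, ← hs0]
      exact hs'
    exact mul_left_cancel₀ (X_ne_zero 2) h2
  have hdescN : ∀ (N : ℕ) (t : MvPolynomial (Fin 3) K), X 2 ^ N * t ∈ Φ.range → t ∈ Φ.range := by
    intro N
    induction N with
    | zero => intro t ht; simpa using ht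
    | succ n ih =>
      intro t ht
      apply ih
      apply hdesc
      have h : X 2 * (X 2 ^ n * t) = X 2 ^ (n + 1) * t := by ring
      rw [h]
      exact ht
  -- surjectivity of Φ
  have hX0mem : X 0 ∈ Φ.range := by
    have hH1eq : Φ (hlift a b c ((a:ℤ) - c * a) f') = X 2 ^ a * X 0 := by
      have hw1 : IsWtHom a b c (Φ (hlift a b c ((a:ℤ) - c * a) f')) ((a:ℤ) - c * a) :=
        hpres _ _ (hlift_isWtHom hc Hf')
      have hw2 : IsWtHom a b c ((X 2 : MvPolynomial (Fin 3) K) ^ a * X 0) ((a:ℤ) - c * a) :=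
        wt_congr (wt_mul (wt_pow wt_X2 a) wt_X0) (by ring)
      have hdiff : subZ (Φ (hlift a b c ((a:ℤ) - c * a) f') - X 2 ^ a * X 0) = 0 := by
        rw [map_sub, hsubZX, subZ_hlift, hef', map_mul, map_pow, hsubZX2', one_pow, one_mul,
          hsubZX0', sub_self]
      exact sub_eq_zero.mp (subZ_inj_wt hc (wt_sub hw1 hw2) hdiff)
    exact hdescN a (X 0) ⟨_, hH1eq⟩
  have hX1mem : X 1 ∈ Φ.range := by
    have hH1eq : Φ (hlift a b c ((b:ℤ) - c * b) g') = X 2 ^ b * X 1 := by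
      have hw1 : IsWtHom a b c (Φ (hlift a b c ((b:ℤ) - c * b) g')) ((b:ℤ) - c * b) :=
        hpres _ _ (hlift_isWtHom hc Hg')
      have hw2 : IsWtHom a b c ((X 2 : MvPolynomial (Fin 3) K) ^ b * X 1) ((b:ℤ) - c * b) :=
        wt_congr (wt_mul (wt_pow wt_X2 b) wt_X1) (by ring)
      have hdiff : subZ (Φ (hlift a b c ((b:ℤ) - c * b) g') - X 2 ^ b * X 1) = 0 := by
        rw [map_sub, hsubZX, subZ_hlift, heg', map_mul, map_pow, hsubZX2', one_pow, one_mul,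
          hsubZX1', sub_self]
      exact sub_eq_zero.mp (subZ_inj_wt hc (wt_sub hw1 hw2) hdiff)
    exact hdescN b (X 1) ⟨_, hH1eq⟩
  have hsurΦ : Function.Surjective Φ := by
    rw [← AlgHom.range_eq_top, eq_top_iff, ← MvPolynomial.adjoin_range_X]
    apply Algebra.adjoin_le
    rintro x ⟨i, rfl⟩
    fin_cases i
    · exact hX0mem
    · exact hX1mem
    · exact ⟨X 2, hΦX2⟩
  -- conclusion
  have hbijΦ : Function.Bijective Φ := ⟨hinjΦ, hsurΦ⟩
  refine ⟨AlgEquiv.ofBijective Φ hbijΦ, ?_, ?_, ?_, ?_⟩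
  · intro d p hp
    have hco : ⇑(AlgEquiv.ofBijective Φ hbijΦ) = ⇑Φ := funext fun _ => rfl
    rw [hco]
    exact hpres d p hp
  · have hco : ⇑(AlgEquiv.ofBijective Φ hbijΦ) = ⇑Φ := funext fun _ => rfl
    rw [hco]
    exact hΦX2
  · have hco : ⇑(AlgEquiv.ofBijective Φ hbijΦ) = ⇑Φ := funext fun _ => rfl
    rw [hco, hΦX0]
    exact hsubF
  · have hco : ⇑(AlgEquiv.ofBijective Φ hbijΦ) = ⇑Φ := funext fun _ => rfl
    rw [hco, hΦX1]
    exact hsubG
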